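/- arXiv:2111.06743 — 2 statements merged into one kernel-verified Lean document; each statement's English description precedes it below -/
import Mathlib

section
/- Let M ≥ 2 be an integer, and let Z be a real random variable with density f_Z(z) = ((M−1)/M)·(1 − z/M)^{M−2} on [0, M]. Let a₁ > 0 and b₁ > 0 be constants with b₁·M < 1. Then the random variable P_EH = a₁·Z / (1 − b₁·Z) has probability density function f_{P_EH}(p) = ((M−1)·a₁) / (M·(a₁ + b₁·p)²) · (1 − p/(M·(a₁ + b₁·p)))^{M−2} for p in the interval [0, a₁M/(1 − b₁M)] (and 0 elsewhere). -/
open MeasureTheory ProbabilityTheory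

open scoped ENNReal

/-- 1D lintegral change of variables. -/
private theorem lintegral_image_1d {s : Set ℝ} {f f' : ℝ → ℝ} (hs : MeasurableSet s)
    (hf' : ∀ x ∈ s, HasDerivWithinAt f (f' x) s x) (hf : Set.InjOn f s) (g : ℝ → ℝ≥0∞) :
    ∫⁻ x in f '' s, g x = ∫⁻ x in s, ENNReal.ofReal |f' x| * g (f x) := by
  simpa only [ContinuousLinearMap.det_toSpanSingleton] using
    lintegral_image_eq_lintegral_abs_det_fderiv_mul volume hs
      (fun x hx => (hf' x hx).hasFDerivWithinAt) hf g

/-- Restricting a set lintegral to the support interval. -/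
private theorem setLIntegral_inter_of_zero {A I : Set ℝ} (hA : MeasurableSet A)
    (hI : MeasurableSet I) (F : ℝ → ℝ≥0∞) (hF : ∀ x ∉ I, F x = 0) :
    ∫⁻ x in A ∩ I, F x = ∫⁻ x in A, F x := by
  rw [← lintegral_indicator (hA.inter hI), ← lintegral_indicator hA]
  congr 1
  ext x
  by_cases hx : x ∈ I
  · by_cases hxA : x ∈ A <;> simp [Set.indicator, hx, hxA]
  · by_cases hxA : x ∈ A <;> simp [Set.indicator, hx, hxA, hF x hx]

/-- **Theorem 1 of the paper.** Let `M ≥ 2` and let `Z` have density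
`f_Z(z) = ((M−1)/M)·(1 − z/M)^(M−2)` on `[0, M]`. Let `a₁ > 0`, `b₁ > 0` with
`b₁·M < 1`. Then `P_EH = a₁·Z/(1 − b₁·Z)` has density
`f(p) = ((M−1)a₁)/(M(a₁+b₁p)²) · (1 − p/(M(a₁+b₁p)))^(M−2)` on
`[0, a₁M/(1 − b₁M)]` and `0` elsewhere. -/
theorem harvested_power_density
    {Ω : Type*} [MeasureSpace Ω] [IsProbabilityMeasure (ℙ : Measure Ω)]
    (M : ℕ) (hM : 2 ≤ M)
    (Z : Ω → ℝ) (hZmeas : Measurable Z)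
    (hZlaw : Measure.map Z ℙ
      = volume.withDensity (fun z => ENNReal.ofReal
          (if z ∈ Set.Icc (0 : ℝ) (M : ℝ) then
            ((M : ℝ) - 1) / M * (1 - z / M) ^ (M - 2) else 0)))
    (a₁ b₁ : ℝ) (ha₁ : 0 < a₁) (hb₁ : 0 < b₁) (hbM : b₁ * M < 1) :
    Measure.map (fun ω => a₁ * Z ω / (1 - b₁ * Z ω)) ℙ
      = volume.withDensity (fun p => ENNReal.ofReal
          (if p ∈ Set.Icc (0 : ℝ) (a₁ * M / (1 - b₁ * M)) then
            ((M : ℝ) - 1) * a₁ / (M * (a₁ + b₁ * p) ^ 2)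
              * (1 - p / (M * (a₁ + b₁ * p))) ^ (M - 2)
          else 0)) := by
  have hMpos : (0:ℝ) < M := by
    have : (2:ℝ) ≤ M := by exact_mod_cast hM
    linarith
  set g : ℝ → ℝ := fun z => a₁ * z / (1 - b₁ * z) with hg_def
  set c : ℝ := a₁ * M / (1 - b₁ * M) with hc_def
  set fZ : ℝ → ℝ := fun z =>
    if z ∈ Set.Icc (0 : ℝ) (M : ℝ) then ((M : ℝ) - 1) / M * (1 - z / M) ^ (M - 2) else 0
    with hfZ_def
  set fP : ℝ → ℝ := fun p =>
    if p ∈ Set.Icc (0 : ℝ) c then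
      ((M : ℝ) - 1) * a₁ / (M * (a₁ + b₁ * p) ^ 2)
        * (1 - p / (M * (a₁ + b₁ * p))) ^ (M - 2) else 0
    with hfP_def
  -- positivity of denominators on [0, M]
  have hden : ∀ z : ℝ, z ∈ Set.Icc (0:ℝ) (M:ℝ) → 0 < 1 - b₁ * z := by
    intro z hz
    have : b₁ * z ≤ b₁ * M := by
      have := hz.2
      nlinarith
    linarith
  have hdenM : (0:ℝ) < 1 - b₁ * M := hden M ⟨le_of_lt hMpos, le_refl _⟩
  -- g is monotone on [0, M]
  have hmono : ∀ z₁ ∈ Set.Icc (0:ℝ) (M:ℝ), ∀ z₂ ∈ Set.Icc (0:ℝ) (M:ℝ),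
      z₁ ≤ z₂ → g z₁ ≤ g z₂ := by
    intro z₁ hz₁ z₂ hz₂ h12
    have d₁ := hden z₁ hz₁
    have d₂ := hden z₂ hz₂
    rw [hg_def]
    simp only
    rw [div_le_div_iff₀ d₁ d₂]
    nlinarith
  have hg0 : g 0 = 0 := by simp [hg_def]
  have hgM : g M = c := by rw [hg_def, hc_def]
  -- g maps [0,M] into [0,c]
  have hmaps : ∀ z ∈ Set.Icc (0:ℝ) (M:ℝ), g z ∈ Set.Icc (0:ℝ) c := by
    intro z hz
    constructor
    · rw [← hg0]; exact hmono 0 ⟨le_refl _, le_of_lt hMpos⟩ z hz hz.1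
    · rw [← hgM]; exact hmono z hz M ⟨le_of_lt hMpos, le_refl _⟩ hz.2
  -- g is injective on [0,M]
  have hinj : Set.InjOn g (Set.Icc (0:ℝ) (M:ℝ)) := by
    intro z₁ hz₁ z₂ hz₂ heq
    have d₁ := hden z₁ hz₁
    have d₂ := hden z₂ hz₂
    rw [hg_def] at heq
    simp only at heq
    rw [div_eq_div_iff d₁.ne' d₂.ne'] at heq
    nlinarith [ha₁.ne']
  -- derivative of g on [0,M]
  have hderiv : ∀ z ∈ Set.Icc (0:ℝ) (M:ℝ),
      HasDerivWithinAt g (a₁ / (1 - b₁ * z) ^ 2) (Set.Icc (0:ℝ) (M:ℝ)) z := by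
    intro z hz
    have d := hden z hz
    have h1 : HasDerivAt (fun z : ℝ => a₁ * z) a₁ z := by
      simpa using (hasDerivAt_id z).const_mul a₁
    have h2 : HasDerivAt (fun z : ℝ => 1 - b₁ * z) (-b₁) z := by
      simpa using ((hasDerivAt_id z).const_mul b₁).const_sub 1
    have := h1.div h2 d.ne'
    have heq : (a₁ * (1 - b₁ * z) - a₁ * z * (-b₁)) / (1 - b₁ * z) ^ 2
        = a₁ / (1 - b₁ * z) ^ 2 := by
      congr 1; ring
    rw [heq] at this
    exact this.hasDerivWithinAt
  -- g is continuous on [0,M]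
  have hcont : ContinuousOn g (Set.Icc (0:ℝ) (M:ℝ)) :=
    fun z hz => ((hderiv z hz).differentiableWithinAt).continuousWithinAt
  -- image of [0,M] under g is [0,c]
  have himage : g '' Set.Icc (0:ℝ) (M:ℝ) = Set.Icc (0:ℝ) c := by
    apply Set.Subset.antisymm
    · rintro p ⟨z, hz, rfl⟩; exact hmaps z hz
    · have := intermediate_value_Icc (le_of_lt hMpos) hcont
      rw [hg0, hgM] at this
      exact this
  -- g is measurable
  have hgmeas : Measurable g := by
    apply Measurable.div
    · exact measurable_const.mul measurable_id
    · exact measurable_const.sub (measurable_const.mul measurable_id)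
  -- rewrite the map as a composition
  have hcomp : (fun ω => a₁ * Z ω / (1 - b₁ * Z ω)) = g ∘ Z := rfl
  rw [hcomp, ← Measure.map_map hgmeas hZmeas, hZlaw]
  -- prove measure equality
  ext A hA
  rw [Measure.map_apply hgmeas hA, withDensity_apply _ (hgmeas hA),
    withDensity_apply _ hA]
  -- reduce both sides to integrals over intersections with supports
  have hIccM : MeasurableSet (Set.Icc (0:ℝ) (M:ℝ)) := measurableSet_Icc
  have hIccc : MeasurableSet (Set.Icc (0:ℝ) c) := measurableSet_Icc
  have hzeroZ : ∀ z ∉ Set.Icc (0:ℝ) (M:ℝ), ENNReal.ofReal (fZ z) = 0 := by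
    intro z hz; rw [hfZ_def]; simp [hz]
  have hzeroP : ∀ p ∉ Set.Icc (0:ℝ) c, ENNReal.ofReal (fP p) = 0 := by
    intro p hp; rw [hfP_def]; simp [hp]
  rw [← setLIntegral_inter_of_zero (hgmeas hA) hIccM _ hzeroZ,
    ← setLIntegral_inter_of_zero hA hIccc _ hzeroP]
  -- set s = g⁻¹ A ∩ [0,M]
  set s : Set ℝ := g ⁻¹' A ∩ Set.Icc (0:ℝ) (M:ℝ) with hs_def
  have hs : MeasurableSet s := (hgmeas hA).inter hIccM
  have hsub : s ⊆ Set.Icc (0:ℝ) (M:ℝ) := Set.inter_subset_right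
  have himg : g '' s = A ∩ Set.Icc (0:ℝ) c := by
    rw [hs_def, Set.image_preimage_inter, himage]
  rw [← himg,
    lintegral_image_1d hs (fun x hx => ((hderiv x (hsub hx)).mono hsub))
      (hinj.mono hsub)]
  -- pointwise identity on s
  apply setLIntegral_congr_fun hs
  intro z hz
  beta_reduce
  have hzM : z ∈ Set.Icc (0:ℝ) (M:ℝ) := hsub hz
  have d := hden z hzM
  have hgz : g z ∈ Set.Icc (0:ℝ) c := hmaps z hzM
  have hd' : (0:ℝ) ≤ a₁ / (1 - b₁ * z) ^ 2 := by positivity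
  rw [abs_of_nonneg hd', ← ENNReal.ofReal_mul hd']
  congr 1
  rw [hfZ_def, hfP_def]
  simp only [hzM, hgz, if_true]
  -- key algebraic identities
  have key1 : a₁ + b₁ * g z = a₁ / (1 - b₁ * z) := by
    rw [hg_def]
    field_simp
    ring
  have key2 : g z / ((M:ℝ) * (a₁ + b₁ * g z)) = z / M := by
    rw [key1, hg_def]
    field_simp [d.ne', hMpos.ne', ha₁.ne']
    exact mul_div_cancel_right₀ z (ne_of_gt (by linarith))
  rw [key2, key1]
  have hpow : (1 - z / (M:ℝ)) ^ (M - 2) = (1 - z / (M:ℝ)) ^ (M - 2) := rfl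
  field_simp [d.ne', hMpos.ne', ha₁.ne']
  exact (mul_div_cancel_right₀ _ (ne_of_gt (by linarith))).symm
end

section
/- Let M ≥ 2 be an integer, and let b ≥ 0 and a be real numbers with a ≥ b·M. Let H and Z be independent real random variables, where H has the Gamma distribution with shape M and rate 1 (density x^{M−1}e^{−x}/(M−1)! on (0,∞)) and Z has density f_Z(z) = ((M−1)/M)(1 − z/M)^{M−2} on [0, M]. Then P(H < a − b·Z) = 1 − (M−1)! · e^{−a} · ∑_{k=0}^{M−1} ∑_{j=0}^{k} [ a^{k−j} · (−bM)^j / ((k−j)! · (M+j−1)!) ] · ∑_{n=0}^{∞} [ (j+1)_n / (M+j)_n ] · (bM)^n / n!, where (y)_n denotes the rising factorial, so that the inner series equals the confluent hypergeometric function ₁F₁(j+1; M+j; bM). -/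
open MeasureTheory ProbabilityTheory intervalIntegral


lemma beta_nat (p q : ℕ) : ∫ u in (0:ℝ)..1, u ^ p * (1 - u) ^ q
    = (Nat.factorial p * Nat.factorial q : ℝ) / Nat.factorial (p + q + 1) := by
  induction q generalizing p with
  | zero =>
      have hp : ((p:ℝ) + 1) ≠ 0 := by positivity
      simp only [pow_zero, mul_one, integral_pow, one_pow, Nat.factorial_zero, Nat.add_zero,
        Nat.factorial_succ]
      push_cast
      rw [eq_div_iff (by positivity)]
      field_simp
      simp
  | succ q ih =>
      have hp : ((p:ℝ) + 1) ≠ 0 := by positivity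
      have key := intervalIntegral.integral_mul_deriv_eq_deriv_mul
        (u := fun x : ℝ => (1 - x) ^ (q + 1)) (u' := fun x : ℝ => -(((q:ℝ)+1) * (1 - x) ^ q))
        (v := fun x : ℝ => x ^ (p + 1) / ((p:ℝ) + 1)) (v' := fun x : ℝ => x ^ p)
        (a := (0:ℝ)) (b := 1)
        (fun x _ => by
          have h1 : HasDerivAt (fun x : ℝ => 1 - x) (-1) x := by
            simpa using (hasDerivAt_id x).const_sub 1
          have := h1.fun_pow (q+1)
          convert this using 1
          push_cast; ring)
        (fun x _ => by
          have := (hasDerivAt_pow (p+1) x).div_const ((p:ℝ)+1)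
          convert this using 1
          push_cast [Nat.add_sub_cancel]
          field_simp)
        (by apply Continuous.intervalIntegrable; continuity)
        (by apply Continuous.intervalIntegrable; continuity)
      have key2 : ∫ u in (0:ℝ)..1, u ^ p * (1 - u) ^ (q+1)
          = ((q:ℝ)+1)/((p:ℝ)+1) * ∫ u in (0:ℝ)..1, u ^ (p+1) * (1 - u) ^ q := by
        simp only [mul_comm] at key
        rw [key]
        rw [← intervalIntegral.integral_const_mul]
        simp only [one_pow, sub_self, zero_pow, mul_zero, zero_div, zero_mul, sub_zero,
          Nat.succ_ne_zero, ne_eq, not_false_iff]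
        rw [zero_sub, ← intervalIntegral.integral_neg]
        congr 1; funext x; ring
      rw [key2, ih]
      have hD : ((p + 1 + q + 1).factorial : ℝ) ≠ 0 := by positivity
      have hE : p + (q + 1) + 1 = p + 1 + q + 1 := by ring
      rw [hE, Nat.factorial_succ (p), Nat.factorial_succ (q)]
      push_cast
      field_simp

lemma beta_nat_scaled (p q : ℕ) {c : ℝ} (hc : 0 < c) :
    ∫ z in (0:ℝ)..c, z ^ p * (1 - z / c) ^ q
      = c ^ (p+1) * (Nat.factorial p * Nat.factorial q : ℝ) / Nat.factorial (p + q + 1) := by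
  have h : (∫ z in (0:ℝ)..c, z ^ p * (1 - z / c) ^ q)
      = ∫ z in (0:ℝ)..c, (fun u : ℝ => (c*u)^p * (1-u)^q) (z / c) := by
    congr 1; funext z
    simp only []
    rw [mul_div_cancel₀ _ hc.ne']
  rw [h, intervalIntegral.integral_comp_div (fun u : ℝ => (c*u)^p * (1-u)^q) hc.ne']
  simp only [zero_div, div_self hc.ne']
  simp only [mul_pow, smul_eq_mul]
  simp_rw [mul_assoc]
  rw [intervalIntegral.integral_const_mul, beta_nat, pow_succ]
  ring

lemma sum_zero_pow_div_factorial (M : ℕ) (hM : 1 ≤ M) :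
    ∑ k ∈ Finset.range M, (0:ℝ) ^ k / (Nat.factorial k) = 1 := by
  rw [Finset.sum_eq_single_of_mem 0 (Finset.mem_range.2 hM)]
  · simp
  · intro k _ hk
    simp [zero_pow hk]

lemma gamma_cdf_nat (M : ℕ) (hM : 1 ≤ M) (t : ℝ) :
    ∫ x in (0:ℝ)..t, x ^ (M-1) * Real.exp (-x) / (Nat.factorial (M-1))
      = 1 - Real.exp (-t) * ∑ k ∈ Finset.range M, t ^ k / (Nat.factorial k) := by
  obtain ⟨N, rfl⟩ : ∃ N, M = N + 1 := ⟨M - 1, (Nat.succ_pred_eq_of_pos hM).symm⟩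
  have hF : ∀ x : ℝ, HasDerivAt
      (fun x => 1 - Real.exp (-x) * ∑ k ∈ Finset.range (N+1), x ^ k / (Nat.factorial k))
      (x ^ N * Real.exp (-x) / (Nat.factorial N)) x := by
    intro x
    have hexp : HasDerivAt (fun x : ℝ => Real.exp (-x)) (-Real.exp (-x)) x := by
      simpa using ((hasDerivAt_id x).neg).exp
    have hsum : HasDerivAt (fun x : ℝ => ∑ k ∈ Finset.range (N+1), x ^ k / (Nat.factorial k))
        (∑ k ∈ Finset.range (N+1), (k * x ^ (k-1)) / (Nat.factorial k)) x :=
      HasDerivAt.fun_sum fun k _ => (hasDerivAt_pow k x).div_const _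
    have hD : ∑ k ∈ Finset.range (N+1), ((k:ℝ) * x ^ (k-1)) / (Nat.factorial k)
        = ∑ i ∈ Finset.range N, x ^ i / (Nat.factorial i) := by
      rw [Finset.sum_range_succ']
      simp only [Nat.cast_zero, zero_mul, Nat.factorial_zero, Nat.cast_one, zero_div, add_zero]
      refine Finset.sum_congr rfl fun i _ => ?_
      rw [Nat.factorial_succ, Nat.add_sub_cancel]
      push_cast
      have h1 : ((i:ℝ)+1) ≠ 0 := by positivity
      have h2 : ((Nat.factorial i : ℝ)) ≠ 0 := by positivity
      field_simp
    have := (hexp.mul hsum).const_sub 1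
    refine this.congr_deriv ?_
    rw [hD, Finset.sum_range_succ]
    ring
  have hcont : Continuous fun x : ℝ => x ^ N * Real.exp (-x) / (Nat.factorial N) := by
    continuity
  have := intervalIntegral.integral_eq_sub_of_hasDerivAt
    (f := fun x => 1 - Real.exp (-x) * ∑ k ∈ Finset.range (N+1), x ^ k / (Nat.factorial k))
    (a := 0) (b := t) (fun x _ => hF x) (hcont.intervalIntegrable 0 t)
  simpa [sum_zero_pow_div_factorial (N+1) (Nat.le_add_left 1 N), Nat.add_sub_cancel] using this

lemma kummer_integral (M : ℕ) (hM : 2 ≤ M) {b : ℝ} (hb : 0 ≤ b) (j : ℕ) :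
    ∫ z in (0:ℝ)..(M:ℝ), (z ^ j * Real.exp (b * z)) * (((M:ℝ) - 1) / M * (1 - z / M) ^ (M - 2))
      = (Nat.factorial (M-1) : ℝ) * (M:ℝ) ^ j * (Nat.factorial j) / (Nat.factorial (M + j - 1))
        * ∑' n : ℕ, ((ascPochhammer ℝ n).eval ((j : ℝ) + 1)
            / (ascPochhammer ℝ n).eval ((M : ℝ) + j)) * (b * M) ^ n / (Nat.factorial n : ℝ) := by
  obtain ⟨m, rfl⟩ : ∃ m, M = m + 2 := ⟨M - 2, by omega⟩
  have hM0 : (0:ℝ) < ((m:ℝ) + 2) := by positivity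
  have hMcast : ((m + 2 : ℕ) : ℝ) = (m:ℝ) + 2 := by push_cast; ring
  set g : ℝ → ℝ := fun z => (((m:ℝ) + 2) - 1) / ((m:ℝ)+2) * (1 - z / ((m:ℝ)+2)) ^ m with hg
  set f : ℕ → ℝ → ℝ := fun n z => (b ^ n / (Nat.factorial n)) * (z ^ (j + n) * g z) with hf
  have hgz : ∀ z ∈ Set.Ioc (0:ℝ) ((m:ℝ)+2), 0 ≤ g z ∧ g z ≤ 1 := by
    intro z hz
    have h1 : (0:ℝ) ≤ 1 - z / ((m:ℝ)+2) := by
      rw [sub_nonneg, div_le_one hM0]; exact hz.2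
    have h2 : 1 - z / ((m:ℝ)+2) ≤ 1 := by
      have : 0 ≤ z / ((m:ℝ)+2) := div_nonneg hz.1.le hM0.le
      linarith
    constructor
    · have hm0 : (0:ℝ) ≤ (m:ℝ) := Nat.cast_nonneg m
      exact mul_nonneg (div_nonneg (by linarith) hM0.le) (pow_nonneg h1 m)
    · have := pow_le_one₀ h1 h2 (n := m)
      have hq : (((m:ℝ) + 2) - 1) / ((m:ℝ)+2) ≤ 1 := by
        rw [div_le_one hM0]; linarith
      calc (((m:ℝ) + 2) - 1) / ((m:ℝ)+2) * (1 - z / ((m:ℝ)+2)) ^ m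
          ≤ 1 * 1 := mul_le_mul hq this (pow_nonneg h1 m) (by norm_num)
        _ = 1 := by norm_num
  -- step 1: pointwise expansion
  have hpt : ∀ z : ℝ, (z ^ j * Real.exp (b * z)) * g z = ∑' n : ℕ, f n z := by
    intro z
    rw [Real.exp_eq_exp_ℝ, NormedSpace.exp_eq_tsum_div]
    rw [← tsum_mul_left (a := z ^ j), ← tsum_mul_right]
    refine tsum_congr fun n => ?_
    simp only [hf, smul_eq_mul]
    rw [mul_pow, pow_add]
    ring
  -- step 2: convergence bound
  have hfmeas : ∀ n : ℕ, Continuous (f n) := by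
    intro n; apply Continuous.mul continuous_const
    apply Continuous.mul (continuous_pow _)
    apply Continuous.mul continuous_const
    exact ((continuous_const.sub (continuous_id.div_const _)).pow m)
  have hbound : ∑' n : ℕ, ∫⁻ z in Set.Ioc (0:ℝ) ((m:ℝ)+2), ‖f n z‖₊ ∂volume ≠ ⊤ := by
    have hle : ∀ n : ℕ, ∫⁻ z in Set.Ioc (0:ℝ) ((m:ℝ)+2), ‖f n z‖₊ ∂volume
        ≤ ENNReal.ofReal ((((m:ℝ)+2) ^ (j+1) * ((b * ((m:ℝ)+2)) ^ n / (Nat.factorial n)))) := by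
      intro n
      have hptb : ∀ z ∈ Set.Ioc (0:ℝ) ((m:ℝ)+2),
          (‖f n z‖₊ : ENNReal) ≤ ENNReal.ofReal ((((m:ℝ)+2) ^ (j+n)) * (b ^ n / (Nat.factorial n))) := by
        intro z hz
        rw [← enorm_eq_nnnorm, ← ofReal_norm]
        apply ENNReal.ofReal_le_ofReal
        obtain ⟨hg0, hg1⟩ := hgz z hz
        have hzn : 0 ≤ z := hz.1.le
        have : |f n z| = f n z := abs_of_nonneg (by positivity)
        rw [Real.norm_eq_abs, this, hf]
        simp only []
        have hzpow : z ^ (j+n) ≤ ((m:ℝ)+2) ^ (j+n) := pow_le_pow_left₀ hzn hz.2 _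
        calc b ^ n / (Nat.factorial n) * (z ^ (j + n) * g z)
            ≤ b ^ n / (Nat.factorial n) * (((m:ℝ)+2) ^ (j+n) * 1) := by
              apply mul_le_mul_of_nonneg_left _ (by positivity)
              exact mul_le_mul hzpow hg1 hg0 (by positivity)
          _ = ((m:ℝ)+2) ^ (j+n) * (b ^ n / (Nat.factorial n)) := by ring
      calc ∫⁻ z in Set.Ioc (0:ℝ) ((m:ℝ)+2), ‖f n z‖₊ ∂volume
          ≤ ∫⁻ _ in Set.Ioc (0:ℝ) ((m:ℝ)+2),
              ENNReal.ofReal ((((m:ℝ)+2) ^ (j+n)) * (b ^ n / (Nat.factorial n))) ∂volume := by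
            apply setLIntegral_mono' measurableSet_Ioc hptb
        _ = ENNReal.ofReal ((((m:ℝ)+2) ^ (j+n)) * (b ^ n / (Nat.factorial n)))
              * volume (Set.Ioc (0:ℝ) ((m:ℝ)+2)) := setLIntegral_const _ _
        _ ≤ ENNReal.ofReal ((((m:ℝ)+2) ^ (j+1) * ((b * ((m:ℝ)+2)) ^ n / (Nat.factorial n)))) := by
            rw [Real.volume_Ioc, ← ENNReal.ofReal_mul (by positivity)]
            apply ENNReal.ofReal_le_ofReal
            rw [mul_pow, pow_add, pow_add]
            have : (0:ℝ) ≤ ((m:ℝ)+2) := by positivity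
            rw [sub_zero]
            calc ((m:ℝ)+2) ^ j * ((m:ℝ)+2) ^ n * (b ^ n / ↑(Nat.factorial n)) * ((m:ℝ)+2)
                = ((m:ℝ)+2) ^ j * ((m:ℝ)+2) ^ 1 * (b ^ n * ((m:ℝ)+2) ^ n / ↑(Nat.factorial n)) := by
                  ring
              _ ≤ _ := le_of_eq (by ring)
    refine ne_top_of_le_ne_top (ENNReal.ofReal_ne_top
      (r := ∑' n : ℕ, (((m:ℝ)+2) ^ (j+1) * ((b * ((m:ℝ)+2)) ^ n / (Nat.factorial n))))) ?_
    calc ∑' n : ℕ, ∫⁻ z in Set.Ioc (0:ℝ) ((m:ℝ)+2), ‖f n z‖₊ ∂volume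
        ≤ ∑' n : ℕ, ENNReal.ofReal ((((m:ℝ)+2) ^ (j+1) * ((b * ((m:ℝ)+2)) ^ n / (Nat.factorial n)))) :=
          ENNReal.tsum_le_tsum hle
      _ = ENNReal.ofReal (∑' n : ℕ, (((m:ℝ)+2) ^ (j+1) * ((b * ((m:ℝ)+2)) ^ n / (Nat.factorial n)))) := by
          rw [ENNReal.ofReal_tsum_of_nonneg (fun n => by positivity)
            ((Real.summable_pow_div_factorial _).mul_left _)]
  -- index normalizations
  have e1 : m + 2 - 1 = m + 1 := rfl
  have e2 : m + 2 - 2 = m := rfl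
  have e3 : m + 2 + j - 1 = m + j + 1 := by omega
  rw [hMcast, e1, e2, e3]
  rw [intervalIntegral.integral_congr (fun z _ => hpt z)]
  rw [intervalIntegral.integral_of_le hM0.le]
  rw [MeasureTheory.integral_tsum (fun n => ((hfmeas n).aestronglyMeasurable).restrict) hbound]
  have hterm : ∀ n : ℕ, ∫ z in Set.Ioc (0:ℝ) ((m:ℝ)+2), f n z
      = ((b ^ n / (Nat.factorial n)) * ((((m:ℝ)+2) - 1) / ((m:ℝ)+2)))
        * (((m:ℝ)+2) ^ (j+n+1) * ((Nat.factorial (j+n) * Nat.factorial m : ℝ))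
            / (Nat.factorial (j+n+m+1))) := by
    intro n
    rw [← intervalIntegral.integral_of_le hM0.le]
    have hrw : ∀ z : ℝ, f n z
        = ((b ^ n / (Nat.factorial n)) * ((((m:ℝ)+2) - 1) / ((m:ℝ)+2)))
          * (z ^ (j+n) * (1 - z / ((m:ℝ)+2)) ^ m) := by
      intro z; simp only [hf, hg]; ring
    simp_rw [hrw]
    rw [intervalIntegral.integral_const_mul, beta_nat_scaled _ _ hM0]
  simp_rw [hterm]
  rw [← tsum_mul_left]
  refine tsum_congr fun n => ?_
  -- evaluate the Pochhammer symbols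
  set A : ℕ := (j+1).ascFactorial n with hA
  set B : ℕ := (m+j+2).ascFactorial n with hB
  have hevalA : (ascPochhammer ℝ n).eval ((j:ℝ) + 1) = (A:ℝ) := by
    rw [hA, Nat.cast_ascFactorial]; push_cast; ring_nf
  have hevalB : (ascPochhammer ℝ n).eval ((m:ℝ) + 2 + (j:ℝ)) = (B:ℝ) := by
    rw [hB, Nat.cast_ascFactorial]; push_cast; ring_nf
  have hAfac : ((Nat.factorial j : ℝ)) * A = (Nat.factorial (j+n) : ℝ) := by
    exact_mod_cast congrArg (Nat.cast (R := ℝ)) (Nat.factorial_mul_ascFactorial j n)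
  have hBfac : ((Nat.factorial (m+j+1) : ℝ)) * B = (Nat.factorial (m+j+1+n) : ℝ) := by
    exact_mod_cast congrArg (Nat.cast (R := ℝ)) (Nat.factorial_mul_ascFactorial (m+j+1) n)
  have hBpos : (0:ℝ) < B := by
    have : 0 < B := by
      rw [hB, show m+j+2 = (m+j+1)+1 by omega]
      exact Nat.ascFactorial_pos _ _
    exact_mod_cast this
  have e4 : j + n + m + 1 = m + j + 1 + n := by omega
  rw [hevalA, hevalB, e4]
  have hA' : (A:ℝ) = (Nat.factorial (j+n) : ℝ) / (Nat.factorial j : ℝ) := by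
    rw [eq_div_iff (by positivity)]; linarith [hAfac]
  have hB' : (B:ℝ) = (Nat.factorial (m+j+1+n) : ℝ) / (Nat.factorial (m+j+1) : ℝ) := by
    rw [eq_div_iff (by positivity)]; linarith [hBfac]
  rw [hA', hB', Nat.factorial_succ m]
  have h1 : (Nat.factorial n : ℝ) ≠ 0 := by positivity
  have h2 : (Nat.factorial (m+j+1+n) : ℝ) ≠ 0 := by positivity
  have h3 : (Nat.factorial (m+j+1) : ℝ) ≠ 0 := by positivity
  have h4 : (Nat.factorial j : ℝ) ≠ 0 := by positivity
  have h5 : (Nat.factorial (j+n) : ℝ) ≠ 0 := by positivity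
  have h6 : (Nat.factorial m : ℝ) ≠ 0 := by positivity
  have h7 : ((m:ℝ)+2) ≠ 0 := by positivity
  push_cast
  rw [mul_pow]
  field_simp
  ring

lemma real_main (M : ℕ) (hM : 2 ≤ M) (a b : ℝ) (hb : 0 ≤ b) :
    ∫ z in (0:ℝ)..(M:ℝ), (((M:ℝ) - 1) / M * (1 - z / M) ^ (M - 2))
        * (1 - Real.exp (-(a - b*z)) * ∑ k ∈ Finset.range M, (a - b*z) ^ k / (Nat.factorial k))
      = 1 - (Nat.factorial (M - 1) : ℝ) * Real.exp (-a)
          * ∑ k ∈ Finset.range M, ∑ j ∈ Finset.range (k + 1),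
              (a ^ (k - j) * (-(b * M)) ^ j
                  / ((Nat.factorial (k - j) : ℝ) * (Nat.factorial (M + j - 1) : ℝ)))
                * ∑' n : ℕ,
                    ((ascPochhammer ℝ n).eval ((j : ℝ) + 1)
                        / (ascPochhammer ℝ n).eval ((M : ℝ) + j))
                      * (b * M) ^ n / (Nat.factorial n : ℝ) := by
  obtain ⟨m, rfl⟩ : ∃ m, M = m + 2 := ⟨M - 2, by omega⟩
  have hM0 : (0:ℝ) < ((m+2:ℕ):ℝ) := by exact_mod_cast Nat.succ_pos (m+1)
  have e1 : m + 2 - 1 = m + 1 := rfl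
  have e2 : m + 2 - 2 = m := rfl
  have e3 : ∀ j : ℕ, m + 2 + j - 1 = m + j + 1 := fun j => by omega
  rw [e1, e2]
  simp_rw [e3]
  set c : ℝ := ((m+2:ℕ):ℝ) with hc
  set g : ℝ → ℝ := fun z => (c - 1) / c * (1 - z / c) ^ m with hg
  have hgc : Continuous g := by
    apply Continuous.mul continuous_const
    exact (continuous_const.sub (continuous_id.div_const _)).pow m
  have hsplit : ∀ z : ℝ, Real.exp (-(a - b*z)) = Real.exp (-a) * Real.exp (b*z) := by
    intro z; rw [show -(a-b*z) = -a + b*z by ring, Real.exp_add]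
  have hpow : ∀ (z:ℝ) (k : ℕ), (a - b*z)^k
      = ∑ j ∈ Finset.range (k+1), (-(b*z))^j * a^(k-j) * (Nat.choose k j : ℝ) := by
    intro z k; rw [show a - b*z = -(b*z) + a by ring, add_pow]
  have hintegrand : ∀ z : ℝ, g z * (1 - Real.exp (-(a - b*z))
        * ∑ k ∈ Finset.range (m+2), (a - b*z) ^ k / (Nat.factorial k))
      = g z - ∑ k ∈ Finset.range (m+2), ∑ j ∈ Finset.range (k+1),
          (Real.exp (-a) / (Nat.factorial k) * (Nat.choose k j : ℝ) * a^(k-j) * (-b)^j)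
            * ((z^j * Real.exp (b*z)) * g z) := by
    intro z
    rw [mul_sub, mul_one]
    congr 1
    simp_rw [hsplit z]
    rw [Finset.mul_sum, Finset.mul_sum]
    refine Finset.sum_congr rfl fun k _ => ?_
    rw [hpow z k, Finset.sum_div, Finset.mul_sum, Finset.mul_sum]
    refine Finset.sum_congr rfl fun j _ => ?_
    ring
  rw [intervalIntegral.integral_congr (fun z _ => hintegrand z)]
  have hii : ∀ (j : ℕ), IntervalIntegrable (fun z => (z^j * Real.exp (b*z)) * g z)
      volume 0 c := by
    intro j
    apply Continuous.intervalIntegrable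
    exact ((continuous_pow j).mul (Real.continuous_exp.comp (continuous_const.mul continuous_id))).mul hgc
  have htc : ∀ j : ℕ, Continuous (fun z : ℝ => (z^j * Real.exp (b*z)) * g z) := by
    intro j
    exact ((continuous_pow j).mul (Real.continuous_exp.comp
      (continuous_const.mul continuous_id))).mul hgc
  have hcs : ∀ k : ℕ, Continuous (fun z : ℝ => ∑ j ∈ Finset.range (k+1),
      (Real.exp (-a) / (Nat.factorial k) * (Nat.choose k j : ℝ) * a^(k-j) * (-b)^j)
        * ((z^j * Real.exp (b*z)) * g z)) := by
    intro k
    apply continuous_finset_sum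
    intro j _
    exact continuous_const.mul (htc j)
  have hiis : ∀ k ∈ Finset.range (m+2), IntervalIntegrable
      (fun z => ∑ j ∈ Finset.range (k+1),
        (Real.exp (-a) / (Nat.factorial k) * (Nat.choose k j : ℝ) * a^(k-j) * (-b)^j)
          * ((z^j * Real.exp (b*z)) * g z)) volume 0 c :=
    fun k _ => (hcs k).intervalIntegrable _ _
  have hcs2 : Continuous (fun z : ℝ => ∑ k ∈ Finset.range (m+2), ∑ j ∈ Finset.range (k+1),
      (Real.exp (-a) / (Nat.factorial k) * (Nat.choose k j : ℝ) * a^(k-j) * (-b)^j)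
        * ((z^j * Real.exp (b*z)) * g z)) := by
    apply continuous_finset_sum
    intro k _
    exact hcs k
  rw [intervalIntegral.integral_sub (hgc.intervalIntegrable _ _)
    (hcs2.intervalIntegrable _ _)]
  have hg1 : (∫ z in (0:ℝ)..c, g z) = 1 := by
    have : ∀ z : ℝ, g z = (c - 1) / c * (z ^ 0 * (1 - z / c) ^ m) := by
      intro z; simp [hg]
    simp_rw [this]
    rw [intervalIntegral.integral_const_mul, beta_nat_scaled 0 m hM0]
    have hcm : c = (m:ℝ) + 2 := by rw [hc]; push_cast; ring
    have h1 : (Nat.factorial (0 + m + 1) : ℝ) = ((m:ℝ)+1) * (Nat.factorial m : ℝ) := by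
      rw [Nat.zero_add, Nat.factorial_succ]; push_cast; ring
    rw [h1, hcm]
    have h2 : (Nat.factorial m : ℝ) ≠ 0 := by positivity
    field_simp
    ring
  rw [hg1]
  congr 1
  rw [intervalIntegral.integral_finset_sum hiis]
  have hin : ∀ k, (∫ z in (0:ℝ)..c, ∑ j ∈ Finset.range (k+1),
        (Real.exp (-a) / (Nat.factorial k) * (Nat.choose k j : ℝ) * a^(k-j) * (-b)^j)
          * ((z^j * Real.exp (b*z)) * g z))
      = ∑ j ∈ Finset.range (k+1),
        (Real.exp (-a) / (Nat.factorial k) * (Nat.choose k j : ℝ) * a^(k-j) * (-b)^j)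
          * ((Nat.factorial (m+1) : ℝ) * c ^ j * (Nat.factorial j)
              / (Nat.factorial (m + j + 1))
            * ∑' n : ℕ, ((ascPochhammer ℝ n).eval ((j : ℝ) + 1)
                / (ascPochhammer ℝ n).eval (c + j)) * (b * c) ^ n / (Nat.factorial n : ℝ)) := by
    intro k
    rw [intervalIntegral.integral_finset_sum (fun j _ => ((hii j).const_mul _ : IntervalIntegrable _ volume 0 c))]
    refine Finset.sum_congr rfl fun j _ => ?_
    rw [intervalIntegral.integral_const_mul]
    congr 1
    have := kummer_integral (m+2) (by omega) hb j
    rw [e1, e3 j] at this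
    exact this
  simp_rw [hin]
  rw [Finset.mul_sum]
  refine Finset.sum_congr rfl fun k _ => ?_
  rw [Finset.mul_sum]
  refine Finset.sum_congr rfl fun j hj => ?_
  have hjk : j ≤ k := by
    have := Finset.mem_range.1 hj; omega
  have hch : ((Nat.choose k j : ℝ)) * (Nat.factorial j) * (Nat.factorial (k-j))
      = (Nat.factorial k : ℝ) := by
    exact_mod_cast congrArg (Nat.cast (R := ℝ))
      (Nat.choose_mul_factorial_mul_factorial hjk)
  have h1 : (Nat.factorial k : ℝ) ≠ 0 := by positivity
  have h2 : (Nat.factorial (k-j) : ℝ) ≠ 0 := by positivity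
  have h3 : (Nat.factorial j : ℝ) ≠ 0 := by positivity
  have h4 : (Nat.factorial (m+j+1) : ℝ) ≠ 0 := by positivity
  have h5 : ((Nat.choose k j : ℕ) : ℝ) ≠ 0 :=
    (Nat.cast_ne_zero (R := ℝ)).2 (Nat.choose_pos hjk).ne'
  rw [show -(b*c) = (-b)*c by ring, mul_pow]
  rw [← hch]
  field_simp


set_option maxHeartbeats 1000000 in
/-- **Theorem 2 of the paper.** -/
theorem hd_outage_probability_closed_form
    {Ω : Type*} [MeasureSpace Ω] [IsProbabilityMeasure (ℙ : Measure Ω)]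
    (M : ℕ) (hM : 2 ≤ M) (a b : ℝ) (hb : 0 ≤ b) (hab : b * M ≤ a)
    (H Z : Ω → ℝ) (hHmeas : Measurable H) (hZmeas : Measurable Z)
    (hindep : IndepFun H Z ℙ)
    (hHlaw : Measure.map H ℙ
      = volume.withDensity (fun x => ENNReal.ofReal
          (if 0 < x then x ^ (M - 1) * Real.exp (-x) / (Nat.factorial (M - 1)) else 0)))
    (hZlaw : Measure.map Z ℙ
      = volume.withDensity (fun z => ENNReal.ofReal
          (if z ∈ Set.Icc (0 : ℝ) (M : ℝ) then
            ((M : ℝ) - 1) / M * (1 - z / M) ^ (M - 2) else 0))) :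
    ℙ {ω | H ω < a - b * Z ω}
      = ENNReal.ofReal (1 - (Nat.factorial (M - 1) : ℝ) * Real.exp (-a)
          * ∑ k ∈ Finset.range M, ∑ j ∈ Finset.range (k + 1),
              (a ^ (k - j) * (-(b * M)) ^ j
                  / ((Nat.factorial (k - j) : ℝ) * (Nat.factorial (M + j - 1) : ℝ)))
                * ∑' n : ℕ,
                    ((ascPochhammer ℝ n).eval ((j : ℝ) + 1)
                        / (ascPochhammer ℝ n).eval ((M : ℝ) + j))
                      * (b * M) ^ n / (Nat.factorial n : ℝ)) := by
  have hM1 : 1 ≤ M := by omega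
  have hMpos : (0:ℝ) < M := by exact_mod_cast (by omega : 0 < M)
  have hMR1 : (1:ℝ) ≤ M := by exact_mod_cast hM1
  haveI hPμ : IsProbabilityMeasure (Measure.map H ℙ) :=
    Measure.isProbabilityMeasure_map hHmeas.aemeasurable
  haveI hPν : IsProbabilityMeasure (Measure.map Z ℙ) :=
    Measure.isProbabilityMeasure_map hZmeas.aemeasurable
  have hs : MeasurableSet {p : ℝ × ℝ | p.2 < a - b * p.1} :=
    measurableSet_lt measurable_snd (measurable_const.sub (measurable_fst.const_mul b))
  have h1 : ℙ {ω | H ω < a - b * Z ω}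
      = ((Measure.map Z ℙ).prod (Measure.map H ℙ)) {p : ℝ × ℝ | p.2 < a - b * p.1} := by
    rw [← (indepFun_iff_map_prod_eq_prod_map_map hZmeas.aemeasurable
      hHmeas.aemeasurable).1 hindep.symm]
    rw [Measure.map_apply (hZmeas.prodMk hHmeas) hs]
    rfl
  rw [h1, Measure.prod_apply hs]
  have hpre : ∀ z : ℝ, (Prod.mk z ⁻¹' {p : ℝ × ℝ | p.2 < a - b * p.1})
      = Set.Iio (a - b * z) := fun z => rfl
  simp_rw [hpre]
  -- Gamma tail computation
  have hμIio : ∀ t : ℝ, 0 ≤ t → (Measure.map H ℙ) (Set.Iio t)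
      = ENNReal.ofReal (1 - Real.exp (-t)
          * ∑ k ∈ Finset.range M, t ^ k / (Nat.factorial k)) := by
    intro t ht
    rw [hHlaw, withDensity_apply _ measurableSet_Iio]
    have hind : ∀ x : ℝ, ENNReal.ofReal
        (if 0 < x then x ^ (M - 1) * Real.exp (-x) / (Nat.factorial (M - 1)) else 0)
        = Set.indicator (Set.Ioi (0:ℝ))
            (fun x => ENNReal.ofReal (x ^ (M - 1) * Real.exp (-x) / (Nat.factorial (M - 1)))) x := by
      intro x
      by_cases hx : 0 < x
      · rw [if_pos hx, Set.indicator_of_mem (Set.mem_Ioi.2 hx)]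
      · rw [if_neg hx, Set.indicator_of_notMem (fun h => hx (Set.mem_Ioi.1 h))]
        simp
    simp_rw [hind]
    rw [lintegral_indicator measurableSet_Ioi, Measure.restrict_restrict measurableSet_Ioi,
      Set.Ioi_inter_Iio, Measure.restrict_congr_set Ioo_ae_eq_Ioc]
    have hcont : Continuous (fun x : ℝ => x ^ (M - 1) * Real.exp (-x) / (Nat.factorial (M - 1))) := by
      apply Continuous.div_const
      exact (continuous_pow _).mul (Real.continuous_exp.comp continuous_neg)
    rw [← ofReal_integral_eq_lintegral_ofReal (hcont.integrableOn_Ioc)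
      ((ae_restrict_iff' measurableSet_Ioc).2 (Filter.Eventually.of_forall (fun x hx => by
        have hx0 : (0:ℝ) ≤ x := le_of_lt hx.1
        positivity)))]
    rw [← intervalIntegral.integral_of_le ht]
    rw [gamma_cdf_nat M hM1 t]
  -- ν-a.e. membership in [0, M]
  have hZae : ∀ᵐ z ∂(Measure.map Z ℙ), z ∈ Set.Icc (0:ℝ) (M:ℝ) := by
    rw [ae_iff]
    have hcompl : {z : ℝ | ¬ z ∈ Set.Icc (0:ℝ) (M:ℝ)} = (Set.Icc (0:ℝ) (M:ℝ))ᶜ := rfl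
    have h0 : ∫⁻ z in (Set.Icc (0:ℝ) (M:ℝ))ᶜ, ENNReal.ofReal
        (if z ∈ Set.Icc (0 : ℝ) (M : ℝ) then ((M : ℝ) - 1) / M * (1 - z / M) ^ (M - 2) else 0)
          ∂volume = ∫⁻ _ in (Set.Icc (0:ℝ) (M:ℝ))ᶜ, 0 ∂volume := by
      apply setLIntegral_congr_fun measurableSet_Icc.compl
      intro z hz
      dsimp only
      rw [if_neg (Set.notMem_of_mem_compl hz)]
      simp
    rw [hcompl, hZlaw, withDensity_apply _ measurableSet_Icc.compl, h0]
    simp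
  have hFnn : ∀ t : ℝ, 0 ≤ t → 0 ≤ 1 - Real.exp (-t)
      * ∑ k ∈ Finset.range M, t ^ k / (Nat.factorial k) := by
    intro t ht
    rw [← gamma_cdf_nat M hM1 t]
    apply intervalIntegral.integral_nonneg ht
    intro x hx
    have hx0 : (0:ℝ) ≤ x := hx.1
    positivity
  have htnn : ∀ z ∈ Set.Icc (0:ℝ) (M:ℝ), 0 ≤ a - b * z := by
    intro z hz
    have : b * z ≤ b * M := mul_le_mul_of_nonneg_left hz.2 hb
    linarith
  have hinner : ∀ᵐ z ∂(Measure.map Z ℙ), (Measure.map H ℙ) (Set.Iio (a - b * z))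
      = ENNReal.ofReal (1 - Real.exp (-(a - b * z))
          * ∑ k ∈ Finset.range M, (a - b * z) ^ k / (Nat.factorial k)) := by
    refine hZae.mono fun z hz => ?_
    exact hμIio _ (htnn z hz)
  rw [lintegral_congr_ae hinner, hZlaw]
  have hFcont : Continuous (fun z : ℝ => 1 - Real.exp (-(a - b * z))
      * ∑ k ∈ Finset.range M, (a - b * z) ^ k / (Nat.factorial k)) := by
    have h1c : Continuous (fun z : ℝ => a - b * z) :=
      continuous_const.sub (continuous_const.mul continuous_id)
    apply Continuous.sub continuous_const
    apply Continuous.mul (Real.continuous_exp.comp h1c.neg)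
    apply continuous_finset_sum
    intro k _
    exact ((h1c.pow k).div_const _)
  have hFm : Measurable (fun z : ℝ => ENNReal.ofReal (1 - Real.exp (-(a - b * z))
      * ∑ k ∈ Finset.range M, (a - b * z) ^ k / (Nat.factorial k))) :=
    ENNReal.measurable_ofReal.comp hFcont.measurable
  have hfZm : Measurable (fun z : ℝ => ENNReal.ofReal
      (if z ∈ Set.Icc (0 : ℝ) (M : ℝ) then ((M : ℝ) - 1) / M * (1 - z / M) ^ (M - 2) else 0)) := by
    apply ENNReal.measurable_ofReal.comp
    apply Measurable.ite measurableSet_Icc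
    · exact (continuous_const.mul ((continuous_const.sub
        (continuous_id.div_const _)).pow _)).measurable
    · exact measurable_const
  rw [lintegral_withDensity_eq_lintegral_mul volume hfZm hFm]
  have hgnn : ∀ z ∈ Set.Icc (0:ℝ) (M:ℝ), 0 ≤ ((M : ℝ) - 1) / M * (1 - z / M) ^ (M - 2) := by
    intro z hz
    have h1 : (0:ℝ) ≤ 1 - z / M := by
      rw [sub_nonneg, div_le_one hMpos]; exact hz.2
    apply mul_nonneg (div_nonneg (by linarith) hMpos.le) (pow_nonneg h1 _)
  have hind2 : ∀ z : ℝ, (ENNReal.ofReal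
        (if z ∈ Set.Icc (0 : ℝ) (M : ℝ) then ((M : ℝ) - 1) / M * (1 - z / M) ^ (M - 2) else 0)
      * ENNReal.ofReal (1 - Real.exp (-(a - b * z))
          * ∑ k ∈ Finset.range M, (a - b * z) ^ k / (Nat.factorial k)))
      = Set.indicator (Set.Icc (0:ℝ) (M:ℝ))
          (fun z => ENNReal.ofReal ((((M : ℝ) - 1) / M * (1 - z / M) ^ (M - 2))
            * (1 - Real.exp (-(a - b * z))
                * ∑ k ∈ Finset.range M, (a - b * z) ^ k / (Nat.factorial k)))) z := by
    intro z
    by_cases hz : z ∈ Set.Icc (0:ℝ) (M:ℝ)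
    · rw [if_pos hz, Set.indicator_of_mem hz, ENNReal.ofReal_mul (hgnn z hz)]
    · rw [if_neg hz, Set.indicator_of_notMem hz]
      simp
  simp_rw [Pi.mul_apply, hind2]
  rw [lintegral_indicator measurableSet_Icc,
    ← Measure.restrict_congr_set Ioc_ae_eq_Icc]
  have hprod_cont : Continuous (fun z : ℝ => (((M : ℝ) - 1) / M * (1 - z / M) ^ (M - 2))
      * (1 - Real.exp (-(a - b * z))
          * ∑ k ∈ Finset.range M, (a - b * z) ^ k / (Nat.factorial k))) :=
    ((continuous_const.mul ((continuous_const.sub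
      (continuous_id.div_const _)).pow _))).mul hFcont
  rw [← ofReal_integral_eq_lintegral_ofReal (hprod_cont.integrableOn_Ioc)
    ((ae_restrict_iff' measurableSet_Ioc).2 (Filter.Eventually.of_forall (fun z hz => by
      have hzIcc : z ∈ Set.Icc (0:ℝ) (M:ℝ) := ⟨hz.1.le, hz.2⟩
      exact mul_nonneg (hgnn z hzIcc) (hFnn _ (htnn z hzIcc)))))]
  congr 1
  rw [← intervalIntegral.integral_of_le hMpos.le]
  exact real_main M hM a b hb
end
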